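/- Up to the left action of GL(4, ℤ/2), there are exactly two real characteristic matrices on C⁴(7)*, namely (I₄ | A₁) and (I₄ | A₂) where A₁ has columns (1,1,1,0), (0,1,1,1), (1,1,0,1) and A₂ has columns (1,0,1,1), (1,1,1,0), (0,1,1,1). -/

import Mathlib

/-- The 4×4 minor of a 4×7 `ℤ/2`-matrix on columns `a,b,c,d` (0-based). -/
def minorC47 (lam : Matrix (Fin 4) (Fin 7) (ZMod 2)) (a b c d : Fin 7) : ZMod 2 :=
  (lam.submatrix id ![a, b, c, d]).det

/-- `lam` is a real characteristic matrix on `C⁴(7)*`: the 4×4 minors on the 14 maximal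
simplices of `K_{C⁴(7)*}` (written 0-based) are all nonzero. -/
def isRCM47 (lam : Matrix (Fin 4) (Fin 7) (ZMod 2)) : Prop :=
  minorC47 lam 0 1 2 3 ≠ 0 ∧ minorC47 lam 1 2 3 4 ≠ 0 ∧ minorC47 lam 0 1 3 4 ≠ 0 ∧
  minorC47 lam 0 2 3 6 ≠ 0 ∧ minorC47 lam 0 1 2 6 ≠ 0 ∧ minorC47 lam 0 1 4 5 ≠ 0 ∧
  minorC47 lam 0 1 5 6 ≠ 0 ∧ minorC47 lam 1 2 4 5 ≠ 0 ∧ minorC47 lam 1 2 5 6 ≠ 0 ∧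
  minorC47 lam 2 3 4 5 ≠ 0 ∧ minorC47 lam 2 3 5 6 ≠ 0 ∧ minorC47 lam 0 3 4 6 ≠ 0 ∧
  minorC47 lam 0 4 5 6 ≠ 0 ∧ minorC47 lam 3 4 5 6 ≠ 0

/-- `(I₄ | A₁)` with `A₁` having columns `(1,1,1,0), (0,1,1,1), (1,1,0,1)`. -/
def Lam1 : Matrix (Fin 4) (Fin 7) (ZMod 2) :=
  !![1,0,0,0,1,0,1; 0,1,0,0,1,1,1; 0,0,1,0,1,1,0; 0,0,0,1,0,1,1]

/-- `(I₄ | A₂)` with `A₂` having columns `(1,0,1,1), (1,1,1,0), (0,1,1,1)`. -/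
def Lam2 : Matrix (Fin 4) (Fin 7) (ZMod 2) :=
  !![1,0,0,0,1,1,0; 0,1,0,0,0,1,1; 0,0,1,0,1,1,1; 0,0,0,1,1,0,1]

/- ## Auxiliary machinery -/

/-- Explicit 4×4 determinant formula over `ZMod 2` (signs irrelevant). -/
def det4 (m : Fin 4 → Fin 4 → ZMod 2) : ZMod 2 :=
  m 0 0 * (m 1 1 * (m 2 2 * m 3 3 + m 2 3 * m 3 2) + m 1 2 * (m 2 1 * m 3 3 + m 2 3 * m 3 1) + m 1 3 * (m 2 1 * m 3 2 + m 2 2 * m 3 1)) +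
  m 0 1 * (m 1 0 * (m 2 2 * m 3 3 + m 2 3 * m 3 2) + m 1 2 * (m 2 0 * m 3 3 + m 2 3 * m 3 0) + m 1 3 * (m 2 0 * m 3 2 + m 2 2 * m 3 0)) +
  m 0 2 * (m 1 0 * (m 2 1 * m 3 3 + m 2 3 * m 3 1) + m 1 1 * (m 2 0 * m 3 3 + m 2 3 * m 3 0) + m 1 3 * (m 2 0 * m 3 1 + m 2 1 * m 3 0)) +
  m 0 3 * (m 1 0 * (m 2 1 * m 3 2 + m 2 2 * m 3 1) + m 1 1 * (m 2 0 * m 3 2 + m 2 2 * m 3 0) + m 1 2 * (m 2 0 * m 3 1 + m 2 1 * m 3 0))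

set_option maxHeartbeats 4000000 in
theorem det4_eq (m : Matrix (Fin 4) (Fin 4) (ZMod 2)) : m.det = det4 m := by
  simp only [Matrix.det_succ_row_zero, Matrix.det_fin_one, Fin.sum_univ_succ,
    Matrix.submatrix_apply, det4, CharTwo.neg_eq]
  simp [Fin.succAbove, Fin.lt_def]
  have h1 : (Fin.succ 2 : Fin 4) = 3 := rfl
  have h2 : (Fin.castSucc 2 : Fin 4) = 2 := rfl
  ring

def minor' (lam : Matrix (Fin 4) (Fin 7) (ZMod 2)) (a b c d : Fin 7) : ZMod 2 :=
  det4 fun i j => lam i (![a,b,c,d] j)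

theorem minor'_eq (lam : Matrix (Fin 4) (Fin 7) (ZMod 2)) (a b c d : Fin 7) :
    minorC47 lam a b c d = minor' lam a b c d := det4_eq _

def isRCM47' (lam : Matrix (Fin 4) (Fin 7) (ZMod 2)) : Prop :=
  minor' lam 0 1 2 3 ≠ 0 ∧ minor' lam 1 2 3 4 ≠ 0 ∧ minor' lam 0 1 3 4 ≠ 0 ∧
  minor' lam 0 2 3 6 ≠ 0 ∧ minor' lam 0 1 2 6 ≠ 0 ∧ minor' lam 0 1 4 5 ≠ 0 ∧
  minor' lam 0 1 5 6 ≠ 0 ∧ minor' lam 1 2 4 5 ≠ 0 ∧ minor' lam 1 2 5 6 ≠ 0 ∧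
  minor' lam 2 3 4 5 ≠ 0 ∧ minor' lam 2 3 5 6 ≠ 0 ∧ minor' lam 0 3 4 6 ≠ 0 ∧
  minor' lam 0 4 5 6 ≠ 0 ∧ minor' lam 3 4 5 6 ≠ 0

theorem isRCM47_iff (lam : Matrix (Fin 4) (Fin 7) (ZMod 2)) : isRCM47 lam ↔ isRCM47' lam := by
  unfold isRCM47 isRCM47'
  simp only [minor'_eq]

/- ## Boolean mirror of the computation -/

def bdet4 (m : Fin 4 → Fin 4 → Bool) : Bool :=
  xor (xor (xor
  (m 0 0 && (xor (xor (m 1 1 && (xor (m 2 2 && m 3 3) (m 2 3 && m 3 2))) (m 1 2 && (xor (m 2 1 && m 3 3) (m 2 3 && m 3 1)))) (m 1 3 && (xor (m 2 1 && m 3 2) (m 2 2 && m 3 1)))))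
  (m 0 1 && (xor (xor (m 1 0 && (xor (m 2 2 && m 3 3) (m 2 3 && m 3 2))) (m 1 2 && (xor (m 2 0 && m 3 3) (m 2 3 && m 3 0)))) (m 1 3 && (xor (m 2 0 && m 3 2) (m 2 2 && m 3 0))))))
  (m 0 2 && (xor (xor (m 1 0 && (xor (m 2 1 && m 3 3) (m 2 3 && m 3 1))) (m 1 1 && (xor (m 2 0 && m 3 3) (m 2 3 && m 3 0)))) (m 1 3 && (xor (m 2 0 && m 3 1) (m 2 1 && m 3 0))))))
  (m 0 3 && (xor (xor (m 1 0 && (xor (m 2 1 && m 3 2) (m 2 2 && m 3 1))) (m 1 1 && (xor (m 2 0 && m 3 2) (m 2 2 && m 3 0)))) (m 1 2 && (xor (m 2 0 && m 3 1) (m 2 1 && m 3 0)))))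

def b2z (b : Bool) : ZMod 2 := cond b 1 0

theorem toZ_xor (a b : Bool) : b2z (xor a b) = b2z a + b2z b := by cases a <;> cases b <;> decide

theorem toZ_and (a b : Bool) : b2z (a && b) = b2z a * b2z b := by cases a <;> cases b <;> decide

theorem toZ_det4 (m : Fin 4 → Fin 4 → Bool) :
    det4 (fun i j => b2z (m i j)) = b2z (bdet4 m) := by
  simp only [bdet4, toZ_xor, toZ_and, det4]

theorem toZ_ne_zero (b : Bool) : b2z b ≠ 0 ↔ b = true := by cases b <;> simp [b2z]

def bminor (m : Fin 4 → Fin 7 → Bool) (a b c d : Fin 7) : Bool :=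
  bdet4 fun i j => m i (![a,b,c,d] j)

theorem minor'_toZ (m : Fin 4 → Fin 7 → Bool) (a b c d : Fin 7) :
    minor' (Matrix.of fun i j => b2z (m i j)) a b c d = b2z (bminor m a b c d) :=
  toZ_det4 _

def bcheck (m : Fin 4 → Fin 7 → Bool) : Bool :=
  bminor m 0 1 2 3 && bminor m 1 2 3 4 && bminor m 0 1 3 4 &&
  bminor m 0 2 3 6 && bminor m 0 1 2 6 && bminor m 0 1 4 5 &&
  bminor m 0 1 5 6 && bminor m 1 2 4 5 && bminor m 1 2 5 6 &&
  bminor m 2 3 4 5 && bminor m 2 3 5 6 && bminor m 0 3 4 6 &&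
  bminor m 0 4 5 6 && bminor m 3 4 5 6

def baug (a b c d e f g h i j k l : Bool) : Fin 4 → Fin 7 → Bool :=
  fun x y => ![![true,false,false,false,a,b,c], ![false,true,false,false,d,e,f],
    ![false,false,true,false,g,h,i], ![false,false,false,true,j,k,l]] x y

set_option maxRecDepth 100000 in
set_option maxHeartbeats 10000000 in
set_option synthInstance.maxHeartbeats 2000000 in
set_option synthInstance.maxSize 100000 in
theorem bkey : ∀ a b c d e f g h i j k l : Bool,
    bcheck (baug a b c d e f g h i j k l) = true →
    (a = true ∧ b = false ∧ c = true ∧ d = true ∧ e = true ∧ f = true ∧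
     g = true ∧ h = true ∧ i = false ∧ j = false ∧ k = true ∧ l = true) ∨
    (a = true ∧ b = true ∧ c = false ∧ d = false ∧ e = true ∧ f = true ∧
     g = true ∧ h = true ∧ i = true ∧ j = true ∧ k = false ∧ l = true) := by
  decide

/-- Column-submatrix commutes with left multiplication. -/
theorem submatrix_mul_cols (A : Matrix (Fin 4) (Fin 4) (ZMod 2))
    (B : Matrix (Fin 4) (Fin 7) (ZMod 2)) (f : Fin 4 → Fin 7) :
    (A * B).submatrix id f = A * (B.submatrix id f) := by
  ext i j
  simp [Matrix.mul_apply]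

theorem minorC47_mul (g : Matrix (Fin 4) (Fin 4) (ZMod 2))
    (lam : Matrix (Fin 4) (Fin 7) (ZMod 2)) (a b c d : Fin 7) :
    minorC47 (g * lam) a b c d = g.det * minorC47 lam a b c d := by
  unfold minorC47
  rw [submatrix_mul_cols, Matrix.det_mul]

set_option maxHeartbeats 1000000 in
theorem isRCM47_mul (g : Matrix (Fin 4) (Fin 4) (ZMod 2)) (hg : IsUnit g.det)
    (lam : Matrix (Fin 4) (Fin 7) (ZMod 2)) (h : isRCM47 lam) : isRCM47 (g * lam) := by
  have hg0 : g.det ≠ 0 := hg.ne_zero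
  unfold isRCM47 at h ⊢
  simp only [minorC47_mul, mul_ne_zero_iff]
  exact ⟨⟨hg0, h.1⟩, ⟨hg0, h.2.1⟩, ⟨hg0, h.2.2.1⟩, ⟨hg0, h.2.2.2.1⟩, ⟨hg0, h.2.2.2.2.1⟩,
    ⟨hg0, h.2.2.2.2.2.1⟩, ⟨hg0, h.2.2.2.2.2.2.1⟩, ⟨hg0, h.2.2.2.2.2.2.2.1⟩,
    ⟨hg0, h.2.2.2.2.2.2.2.2.1⟩, ⟨hg0, h.2.2.2.2.2.2.2.2.2.1⟩, ⟨hg0, h.2.2.2.2.2.2.2.2.2.2.1⟩,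
    ⟨hg0, h.2.2.2.2.2.2.2.2.2.2.2.1⟩, ⟨hg0, h.2.2.2.2.2.2.2.2.2.2.2.2.1⟩,
    ⟨hg0, h.2.2.2.2.2.2.2.2.2.2.2.2.2⟩⟩

def z2b (x : ZMod 2) : Bool := x = 1

theorem b2z_z2b (x : ZMod 2) : b2z (z2b x) = x := by
  revert x; decide

def augz (a b c d e f g h i j k l : ZMod 2) : Matrix (Fin 4) (Fin 7) (ZMod 2) :=
  !![1,0,0,0,a,b,c; 0,1,0,0,d,e,f; 0,0,1,0,g,h,i; 0,0,0,1,j,k,l]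

theorem augz_b2z (a b c d e f g h i j k l : Bool) :
    augz (b2z a) (b2z b) (b2z c) (b2z d) (b2z e) (b2z f) (b2z g) (b2z h) (b2z i)
      (b2z j) (b2z k) (b2z l)
      = Matrix.of fun x y => b2z (baug a b c d e f g h i j k l x y) := by
  ext x y
  fin_cases x <;> fin_cases y <;> rfl

theorem key (a b c d e f g h i j k l : ZMod 2)
    (hrcm : isRCM47 (augz a b c d e f g h i j k l)) :
    augz a b c d e f g h i j k l = Lam1 ∨ augz a b c d e f g h i j k l = Lam2 := by
  rw [isRCM47_iff] at hrcm
  rw [← b2z_z2b a, ← b2z_z2b b, ← b2z_z2b c, ← b2z_z2b d, ← b2z_z2b e, ← b2z_z2b f,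
    ← b2z_z2b g, ← b2z_z2b h, ← b2z_z2b i, ← b2z_z2b j, ← b2z_z2b k, ← b2z_z2b l] at hrcm ⊢
  rw [augz_b2z] at hrcm ⊢
  obtain ⟨h1,h2,h3,h4,h5,h6,h7,h8,h9,h10,h11,h12,h13,h14⟩ := hrcm
  rw [minor'_toZ, toZ_ne_zero] at h1 h2 h3 h4 h5 h6 h7 h8 h9 h10 h11 h12 h13 h14
  have hb : bcheck (baug (z2b a) (z2b b) (z2b c) (z2b d) (z2b e) (z2b f) (z2b g) (z2b h)
      (z2b i) (z2b j) (z2b k) (z2b l)) = true := by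
    unfold bcheck
    simp [h1,h2,h3,h4,h5,h6,h7,h8,h9,h10,h11,h12,h13,h14]
  rcases bkey _ _ _ _ _ _ _ _ _ _ _ _ hb with
    ⟨e1,e2,e3,e4,e5,e6,e7,e8,e9,e10,e11,e12⟩ | ⟨e1,e2,e3,e4,e5,e6,e7,e8,e9,e10,e11,e12⟩
  · left
    rw [e1,e2,e3,e4,e5,e6,e7,e8,e9,e10,e11,e12]
    decide
  · right
    rw [e1,e2,e3,e4,e5,e6,e7,e8,e9,e10,e11,e12]
    decide

set_option maxHeartbeats 4000000 in
theorem stmt_6 :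
    isRCM47 Lam1 ∧ isRCM47 Lam2 ∧
    (∀ lam, isRCM47 lam →
      (∃ g : Matrix (Fin 4) (Fin 4) (ZMod 2), IsUnit g.det ∧ g * lam = Lam1) ∨
      (∃ g : Matrix (Fin 4) (Fin 4) (ZMod 2), IsUnit g.det ∧ g * lam = Lam2)) ∧
    ¬ ∃ g : Matrix (Fin 4) (Fin 4) (ZMod 2), IsUnit g.det ∧ g * Lam1 = Lam2 := by
  refine ⟨?_, ?_, ?_, ?_⟩
  · rw [isRCM47_iff]; unfold isRCM47'; decide
  · rw [isRCM47_iff]; unfold isRCM47'; decide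
  · intro lam hlam
    set M : Matrix (Fin 4) (Fin 4) (ZMod 2) := lam.submatrix id ![0,1,2,3] with hM
    have hMdet : M.det ≠ 0 := hlam.1
    have hMunit : IsUnit M.det := isUnit_iff_ne_zero.mpr hMdet
    set g : Matrix (Fin 4) (Fin 4) (ZMod 2) := M⁻¹ with hg
    have hgM : g * M = 1 := Matrix.nonsing_inv_mul M hMunit
    have hgunit : IsUnit g.det := by
      rw [hg]
      exact M.isUnit_nonsing_inv_det hMunit
    set lam' := g * lam with hlam'
    clear_value M g lam'
    have hrcm' : isRCM47 lam' := by rw [hlam']; exact isRCM47_mul g hgunit lam hlam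
    have hcol : ∀ i : Fin 4, ∀ j : Fin 4,
        lam' i (![0,1,2,3] j) = (1 : Matrix (Fin 4) (Fin 4) (ZMod 2)) i j := by
      intro i j
      have := congrFun (congrFun hgM i) j
      rw [Matrix.mul_apply] at this
      rw [hlam', Matrix.mul_apply]
      simpa [hM, Matrix.submatrix_apply] using this
    have h00 : lam' 0 0 = 1 := (hcol 0 0).trans rfl
    have h01 : lam' 0 1 = 0 := (hcol 0 1).trans rfl
    have h02 : lam' 0 2 = 0 := (hcol 0 2).trans rfl
    have h03 : lam' 0 3 = 0 := (hcol 0 3).trans rfl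
    have h10 : lam' 1 0 = 0 := (hcol 1 0).trans rfl
    have h11 : lam' 1 1 = 1 := (hcol 1 1).trans rfl
    have h12 : lam' 1 2 = 0 := (hcol 1 2).trans rfl
    have h13 : lam' 1 3 = 0 := (hcol 1 3).trans rfl
    have h20 : lam' 2 0 = 0 := (hcol 2 0).trans rfl
    have h21 : lam' 2 1 = 0 := (hcol 2 1).trans rfl
    have h22 : lam' 2 2 = 1 := (hcol 2 2).trans rfl
    have h23 : lam' 2 3 = 0 := (hcol 2 3).trans rfl
    have h30 : lam' 3 0 = 0 := (hcol 3 0).trans rfl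
    have h31 : lam' 3 1 = 0 := (hcol 3 1).trans rfl
    have h32 : lam' 3 2 = 0 := (hcol 3 2).trans rfl
    have h33 : lam' 3 3 = 1 := (hcol 3 3).trans rfl
    have hform : lam' = augz (lam' 0 4) (lam' 0 5) (lam' 0 6) (lam' 1 4) (lam' 1 5) (lam' 1 6)
        (lam' 2 4) (lam' 2 5) (lam' 2 6) (lam' 3 4) (lam' 3 5) (lam' 3 6) := by
      ext i j
      fin_cases i <;> fin_cases j <;>
        first
          | exact h00 | exact h01 | exact h02 | exact h03
          | exact h10 | exact h11 | exact h12 | exact h13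
          | exact h20 | exact h21 | exact h22 | exact h23
          | exact h30 | exact h31 | exact h32 | exact h33
          | rfl
    rw [hform] at hrcm'
    rcases key _ _ _ _ _ _ _ _ _ _ _ _ hrcm' with hk | hk
    · left; exact ⟨g, hgunit, by rw [← hform] at hk; rw [← hlam']; exact hk⟩
    · right; exact ⟨g, hgunit, by rw [← hform] at hk; rw [← hlam']; exact hk⟩
  · rintro ⟨g, hgu, hg⟩
    have h1 : (g * Lam1).submatrix id ![0,1,2,3] = Lam2.submatrix id ![0,1,2,3] := by
      rw [hg]
    rw [submatrix_mul_cols] at h1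
    have e1 : Lam1.submatrix id ![0,1,2,3] = 1 := by decide
    have e2 : Lam2.submatrix id ![0,1,2,3] = 1 := by decide
    rw [e1, e2, mul_one] at h1
    rw [h1, Matrix.one_mul] at hg
    exact absurd hg (by decide)
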